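/- arXiv:math/0504154 — 2 statements merged into one kernel-verified Lean document; each statement's English description precedes it below -/
import Mathlib

section
/- Let (A,1) be a matrix order unit space and K = (K_n) a matrix metric set of (A,1). Then for every n and all φ,ψ ∈ CS_n(A), sup{‖⟪φ,a⟫ − ⟪ψ,a⟫‖ : a ∈ K_r, r ∈ ℕ} = sup{‖⟪φ,a⟫ − ⟪ψ,a⟫‖ : a ∈ K_n}; that is, in the definition of D_{K_n} the supremum over all levels r may be replaced by the supremum over level n alone. -/
open scoped ComplexOrder Matrix.Norms.L2Operator
open Matrix

noncomputable section

abbrev Mat (n : ℕ) (R : Type*) := Matrix (Fin n) (Fin n) R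

variable {B : Type*} [NormedRing B] [StarRing B] [CStarRing B] [NormedAlgebra ℂ B]
  [StarModule ℂ B] [CompleteSpace B]

variable {A : Submodule ℂ B}

/-- The matrix of representatives in `B` of a matrix over the subspace `A`. -/
def mval {r : ℕ} (a : Mat r ↥A) : Mat r B := Matrix.of fun i j => (a i j : B)

/-- Positivity in a matrix algebra over the C*-algebra `B`. -/
def MatPos {ι : Type*} [Fintype ι] (x : Matrix ι ι B) : Prop := ∃ b : Matrix ι ι B, x = bᴴ * b

/-- The matrix pairing `⟪φ, a⟫ = [φ(a_ij)] ∈ M_r(M_n(ℂ))`. -/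
def pairing {n r : ℕ} (φ : ↥A →ₗ[ℂ] Mat n ℂ) (a : Mat r ↥A) :
    Matrix (Fin r × Fin n) (Fin r × Fin n) ℂ :=
  Matrix.of fun p q => φ (a p.1 q.1) p.2 q.2

/-- A matrix state at level `n`: a unital completely positive linear map `A → M_n(ℂ)`. -/
def IsMatrixState (h1 : (1 : B) ∈ A) {n : ℕ} (φ : ↥A →ₗ[ℂ] Mat n ℂ) : Prop :=
  φ ⟨1, h1⟩ = 1 ∧ ∀ (r : ℕ) (a : Mat r ↥A), MatPos (mval a) → (pairing φ a).PosSemidef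

/-- The norm on `M_n(A)` determined by the matrix order:
`‖a‖_n = inf {t | [[t1, a], [a*, t1]] ≥ 0}`. -/
def matNorm {n : ℕ} (a : Mat n ↥A) : ℝ :=
  sInf {t : ℝ | MatPos (Matrix.fromBlocks (t • (1 : Mat n B)) (mval a) (mval a)ᴴ (t • 1))}

/-- The star operation on `A` (given that `A` is self-adjoint). -/
def starA (hstar : ∀ a ∈ A, star a ∈ A) (a : ↥A) : ↥A := ⟨star (a : B), hstar _ a.2⟩

/-- The adjoint of a matrix over `A`. -/
def starMat (hstar : ∀ a ∈ A, star a ∈ A) {n : ℕ} (a : Mat n ↥A) : Mat n ↥A :=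
  Matrix.of fun i j => starA hstar (a j i)

/-- The direct sum `a ⊕ b` of square matrices. -/
def dSum {V : Type*} [Zero V] {m n : ℕ} (a : Mat m V) (b : Mat n V) : Mat (m + n) V :=
  Matrix.reindex finSumFinEquiv finSumFinEquiv (Matrix.fromBlocks a 0 0 b)

/-- The product `α a β` of a matrix over a ℂ-module by scalar matrices. -/
def matAct {V : Type*} [AddCommMonoid V] [Module ℂ V] {m n : ℕ}
    (α : Matrix (Fin n) (Fin m) ℂ) (a : Mat m V) (β : Matrix (Fin m) (Fin n) ℂ) : Mat n V :=
  Matrix.of fun i j => ∑ k, ∑ l, (α i k * β l j) • a k l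

/-- A matrix metric set of the matrix order unit space `(A, 1)`: a graded set which is norm
compact, self-adjoint, absolutely matrix convex, and separates the matrix states. -/
structure IsMatrixMetricSet (h1 : (1 : B) ∈ A) (hstar : ∀ a ∈ A, star a ∈ A)
    (K : ∀ r : ℕ, Set (Mat r ↥A)) : Prop where
  compact : ∀ r, IsCompact (K r)
  star_mem : ∀ r, ∀ a ∈ K r, starMat hstar a ∈ K r
  dsum_mem : ∀ m n, ∀ a ∈ K m, ∀ b ∈ K n, dSum a b ∈ K (m + n)
  act_mem : ∀ m n (α : Matrix (Fin n) (Fin m) ℂ) (β : Matrix (Fin m) (Fin n) ℂ),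
    ‖α‖ ≤ 1 → ‖β‖ ≤ 1 → ∀ a ∈ K m, matAct α a β ∈ K n
  separates : ∀ n (φ ψ : ↥A →ₗ[ℂ] Mat n ℂ), IsMatrixState h1 φ → IsMatrixState h1 ψ →
    φ ≠ ψ → ∃ r, ∃ a ∈ K r, pairing φ a ≠ pairing ψ a

/-- The metric `D_{K_n}` on the matrix state space. -/
def DK (K : ∀ r : ℕ, Set (Mat r ↥A)) {n : ℕ} (φ ψ : ↥A →ₗ[ℂ] Mat n ℂ) : ℝ :=
  sSup {x : ℝ | ∃ r, ∃ a ∈ K r, x = ‖pairing φ a - pairing ψ a‖}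

/-- A scalar matrix `[α_ij 1] ∈ M_n(ℂ1)`. -/
def scalarMat (h1 : (1 : B) ∈ A) {n : ℕ} (α : Mat n ℂ) : Mat n ↥A :=
  Matrix.of fun i j => α i j • (⟨1, h1⟩ : ↥A)

/-- Condition (1): each `S_n` is norm relatively compact in `M_n(A)`. -/
def Cond1 (S : ∀ n : ℕ, Set (Mat n ↥A)) : Prop := ∀ n, IsCompact (closure (S n))

/-- Condition (2): each family `Ŝ_n` is bounded and equicontinuous with respect to the
matrix metric `D_K` on the matrix state space and the norm metrics on matrices. -/
def Cond2 (h1 : (1 : B) ∈ A) (K : ∀ r : ℕ, Set (Mat r ↥A)) (S : ∀ n : ℕ, Set (Mat n ↥A)) :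
    Prop := ∀ n : ℕ,
  (∃ C > (0 : ℝ), ∀ a ∈ S n, ∀ (r : ℕ) (φ : ↥A →ₗ[ℂ] Mat r ℂ), IsMatrixState h1 φ →
      ‖pairing φ a‖ ≤ C)
  ∧ ∀ ε > (0 : ℝ), ∀ (r : ℕ) (φ : ↥A →ₗ[ℂ] Mat r ℂ), IsMatrixState h1 φ →
      ∃ δ > (0 : ℝ), ∀ a ∈ S n, ∀ ψ : ↥A →ₗ[ℂ] Mat r ℂ, IsMatrixState h1 ψ →
        DK K φ ψ < δ → ‖pairing φ a - pairing ψ a‖ < ε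

/-- Condition (3): each `S_n` is norm bounded, and for every `ε > 0` there is a sequence
`(λ_n)` of positive reals with `S_n ⊆ A_{n,ε} + λ_n K_n + M_n(ℂ1)` for every `n`. -/
def Cond3 (h1 : (1 : B) ∈ A) (K : ∀ r : ℕ, Set (Mat r ↥A)) (S : ∀ n : ℕ, Set (Mat n ↥A)) :
    Prop :=
  (∀ n, ∃ C : ℝ, ∀ a ∈ S n, matNorm a ≤ C)
  ∧ ∀ ε : ℝ, 0 < ε → ∃ lam : ℕ → ℝ, (∀ n, 0 < lam n) ∧
      ∀ n, ∀ a ∈ S n, ∃ b c d : Mat n ↥A, matNorm b ≤ ε ∧ c ∈ K n ∧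
        (∃ α : Mat n ℂ, d = scalarMat h1 α) ∧ a = b + ((lam n : ℂ)) • c + d



section Aux
namespace Cor43Aux


lemma sandwich_mul {n : ℕ} {U : Matrix (Fin n) (Fin n) ℂ} (hUU : star U * U = 1)
    (f g : Fin n → ℂ) :
    (U * diagonal f * star U) * (U * diagonal g * star U)
      = U * diagonal (fun i => f i * g i) * star U := by
  calc (U * diagonal f * star U) * (U * diagonal g * star U)
      = U * (diagonal f * ((star U * U) * (diagonal g * star U))) := by
        simp only [Matrix.mul_assoc]
    _ = U * diagonal (fun i => f i * g i) * star U := by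
        rw [hUU, Matrix.one_mul, ← Matrix.mul_assoc (diagonal f), diagonal_mul_diagonal,
          Matrix.mul_assoc]

lemma sandwich_conjT {n : ℕ} (U : Matrix (Fin n) (Fin n) ℂ) (f : Fin n → ℂ) :
    (U * diagonal f * star U)ᴴ = U * diagonal (fun i => star (f i)) * star U := by
  simp only [Matrix.star_eq_conjTranspose, conjTranspose_mul, conjTranspose_conjTranspose,
    diagonal_conjTranspose, Matrix.mul_assoc]
  rfl

lemma sandwich_trace {n : ℕ} {U : Matrix (Fin n) (Fin n) ℂ} (hUU : star U * U = 1)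
    (f : Fin n → ℂ) : Matrix.trace (U * diagonal f * star U) = ∑ i, f i := by
  rw [Matrix.trace_mul_comm, ← Matrix.mul_assoc, hUU, Matrix.one_mul, trace_diagonal]

lemma trace_conjT_mul {a b : ℕ} (M : Matrix (Fin a) (Fin b) ℂ) :
    Matrix.trace (Mᴴ * M) = ((∑ j, ∑ i, ‖M i j‖ ^ 2 : ℝ) : ℂ) := by
  push_cast
  simp [Matrix.trace, Matrix.diag, Matrix.mul_apply, Matrix.conjTranspose_apply,
    Complex.star_def, Complex.conj_mul', Complex.ofReal_pow]

lemma factor {r n : ℕ} (ξ : EuclideanSpace ℂ (Fin r × Fin n)) (hξ : ‖ξ‖ ≤ 1) :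
    ∃ (β : Matrix (Fin r) (Fin n) ℂ) (v : EuclideanSpace ℂ (Fin n × Fin n)),
      ‖β‖ ≤ 1 ∧ ‖v‖ ≤ 1 ∧ ∀ p : Fin r × Fin n, ξ p = ∑ u, β p.1 u * v (u, p.2) := by
  classical
  set Ξ : Matrix (Fin r) (Fin n) ℂ := Matrix.of (fun k t => ξ (k, t)) with hΞ
  have hP : (Ξᴴ * Ξ).PosSemidef := posSemidef_conjTranspose_mul_self Ξ
  set d : Fin n → ℝ := hP.1.eigenvalues with hd
  set U : Matrix (Fin n) (Fin n) ℂ := (hP.1.eigenvectorUnitary : Matrix (Fin n) (Fin n) ℂ) with hU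
  have hUU : star U * U = 1 := Matrix.UnitaryGroup.star_mul_self hP.1.eigenvectorUnitary
  have hdnn : ∀ i, 0 ≤ d i := hP.eigenvalues_nonneg
  have hspec : Ξᴴ * Ξ = U * diagonal (fun i => (d i : ℂ)) * star U := by
    exact hP.1.spectral_theorem
  set s : Fin n → ℝ := fun i => Real.sqrt (d i) with hs
  set gr : Fin n → ℝ := fun i => if d i = 0 then 0 else (s i)⁻¹ with hgr
  set e : Fin n → ℂ := fun i => if d i = 0 then 0 else 1 with he
  have hsne : ∀ i, d i ≠ 0 → s i ≠ 0 := fun i hi =>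
    Real.sqrt_ne_zero'.2 (lt_of_le_of_ne (hdnn i) (Ne.symm hi))
  have hss : ∀ i, s i * s i = d i := fun i => Real.mul_self_sqrt (hdnn i)
  -- pointwise identities
  have hgs : (fun i => (gr i : ℂ) * (s i : ℂ)) = e := by
    funext i
    by_cases hi : d i = 0
    · simp [hgr, he, hi]
    · simp only [hgr, he, if_neg hi]
      rw [← Complex.ofReal_mul, inv_mul_cancel₀ (hsne i hi), Complex.ofReal_one]
  have hgdg : (fun i => (gr i : ℂ) * ((d i : ℂ) * (gr i : ℂ))) = e := by
    funext i
    by_cases hi : d i = 0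
    · simp [hgr, he, hi]
    · simp only [hgr, he, if_neg hi]
      rw [← Complex.ofReal_mul, ← Complex.ofReal_mul]
      rw [show (s i)⁻¹ * (d i * (s i)⁻¹) = 1 by
        field_simp
        rw [sq, hss i, div_self hi]]
      exact Complex.ofReal_one
  have hee : (fun i => e i * e i) = e := by
    funext i; by_cases hi : d i = 0 <;> simp [he, hi]
  have hestar : (fun i => star (e i)) = e := by
    funext i; by_cases hi : d i = 0 <;> simp [he, hi]
  have hsss : (fun i => (s i : ℂ) * (s i : ℂ)) = (fun i => (d i : ℂ)) := by
    funext i; rw [← Complex.ofReal_mul, hss i]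
  have hde : (fun i => (d i : ℂ) * e i) = (fun i => (d i : ℂ)) := by
    funext i; by_cases hi : d i = 0 <;> simp [he, hi]
  have hed : (fun i => e i * (d i : ℂ)) = (fun i => (d i : ℂ)) := by
    funext i; by_cases hi : d i = 0 <;> simp [he, hi]
  set V : Matrix (Fin n) (Fin n) ℂ := U * diagonal (fun i => (s i : ℂ)) * star U with hV
  set W : Matrix (Fin n) (Fin n) ℂ := U * diagonal (fun i => (gr i : ℂ)) * star U with hW
  set Q : Matrix (Fin n) (Fin n) ℂ := U * diagonal e * star U with hQ
  have hWV : W * V = Q := by rw [hW, hV, sandwich_mul hUU, hgs, hQ]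
  set β : Matrix (Fin r) (Fin n) ℂ := Ξ * W with hβ
  have hQH : Qᴴ = Q := by rw [hQ, sandwich_conjT, hestar]
  have hQQ : Q * Q = Q := by rw [hQ, sandwich_mul hUU, hee]
  have hWH : Wᴴ = W := by
    rw [hW, sandwich_conjT]
    congr 2
    funext i; simp [Complex.star_def, Complex.conj_ofReal]
  -- βᴴ β = Q
  have hββ : βᴴ * β = Q := by
    have h1 : βᴴ * β = W * ((Ξᴴ * Ξ) * W) := by
      rw [hβ, conjTranspose_mul, hWH]
      simp only [Matrix.mul_assoc]
    rw [h1, hspec, hW, sandwich_mul hUU, sandwich_mul hUU, hgdg, hQ]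
  -- P Q = P, Q P = P
  have hPQ : (Ξᴴ * Ξ) * Q = Ξᴴ * Ξ := by rw [hspec, hQ, sandwich_mul hUU, hde]
  have hQP : Q * (Ξᴴ * Ξ) = Ξᴴ * Ξ := by rw [hspec, hQ, sandwich_mul hUU, hed]
  -- Ξ Q = Ξ
  have hΞQ : Ξ * Q = Ξ := by
    have hz : (Ξ - Ξ * Q)ᴴ * (Ξ - Ξ * Q) = 0 := by
      rw [conjTranspose_sub, conjTranspose_mul, hQH, Matrix.sub_mul, Matrix.mul_sub,
        Matrix.mul_sub]
      have e1 : Ξᴴ * (Ξ * Q) = Ξᴴ * Ξ := by rw [← Matrix.mul_assoc, hPQ]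
      have e2 : Q * Ξᴴ * Ξ = Ξᴴ * Ξ := by rw [Matrix.mul_assoc, hQP]
      have e3 : Q * Ξᴴ * (Ξ * Q) = Ξᴴ * Ξ := by
        rw [Matrix.mul_assoc, ← Matrix.mul_assoc Ξᴴ, hPQ, hQP]
      rw [e1, e2, e3]
      simp
    exact (sub_eq_zero.mp (Matrix.conjTranspose_mul_self_eq_zero.mp hz)).symm
  -- β V = Ξ
  have hβV : β * V = Ξ := by rw [hβ, Matrix.mul_assoc, hWV, hΞQ]
  -- norm of Q
  have hQnorm : ‖Q‖ ≤ 1 := by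
    have h2 : ‖Q‖ * ‖Q‖ = ‖Q‖ := by
      calc ‖Q‖ * ‖Q‖ = ‖Qᴴ * Q‖ := (Matrix.l2_opNorm_conjTranspose_mul_self Q).symm
        _ = ‖Q‖ := by rw [hQH, hQQ]
    nlinarith [norm_nonneg Q]
  have hβnorm : ‖β‖ ≤ 1 := by
    have h2 : ‖β‖ * ‖β‖ ≤ 1 := by
      rw [← Matrix.l2_opNorm_conjTranspose_mul_self β, hββ]; exact hQnorm
    nlinarith [norm_nonneg β]
  -- the vector v
  set v : EuclideanSpace ℂ (Fin n × Fin n) :=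
    (WithLp.equiv 2 _).symm (fun q : Fin n × Fin n => V q.1 q.2) with hv
  have hVH : Vᴴ = V := by
    rw [hV, sandwich_conjT]
    congr 2
    funext i; simp [Complex.star_def, Complex.conj_ofReal]
  have hVV : Vᴴ * V = Ξᴴ * Ξ := by
    rw [hVH, hV, sandwich_mul hUU, hsss, hspec]
  -- norm of v
  have hsum : (∑ q : Fin n × Fin n, ‖V q.1 q.2‖ ^ 2) = ∑ p : Fin r × Fin n, ‖ξ p‖ ^ 2 := by
    have t1 := trace_conjT_mul V
    have t2 := trace_conjT_mul Ξ
    rw [hVV, t2] at t1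
    have t3 := Complex.ofReal_injective t1
    calc (∑ q : Fin n × Fin n, ‖V q.1 q.2‖ ^ 2)
        = ∑ u : Fin n, ∑ t : Fin n, ‖V u t‖ ^ 2 := by
          rw [Fintype.sum_prod_type]
      _ = ∑ t : Fin n, ∑ u : Fin n, ‖V u t‖ ^ 2 := by rw [Finset.sum_comm]
      _ = ∑ t : Fin n, ∑ k : Fin r, ‖Ξ k t‖ ^ 2 := t3.symm
      _ = ∑ k : Fin r, ∑ t : Fin n, ‖Ξ k t‖ ^ 2 := by rw [Finset.sum_comm]
      _ = ∑ p : Fin r × Fin n, ‖ξ p‖ ^ 2 := by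
          rw [Fintype.sum_prod_type]; rfl
  have hvnorm : ‖v‖ ≤ 1 := by
    have hn : ‖v‖ = ‖ξ‖ := by
      rw [EuclideanSpace.norm_eq, EuclideanSpace.norm_eq]
      exact congrArg Real.sqrt hsum
    rw [hn]; exact hξ
  refine ⟨β, v, hβnorm, hvnorm, fun p => ?_⟩
  have : Ξ p.1 p.2 = (β * V) p.1 p.2 := by rw [hβV]
  calc ξ p = Ξ p.1 p.2 := rfl
    _ = (β * V) p.1 p.2 := this
    _ = ∑ u, β p.1 u * v (u, p.2) := by
        rw [Matrix.mul_apply]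
        rfl


def kron {r m n : ℕ} (β : Matrix (Fin r) (Fin m) ℂ) :
    Matrix (Fin r × Fin n) (Fin m × Fin n) ℂ :=
  Matrix.of fun p q => β p.1 q.1 * (if p.2 = q.2 then 1 else 0)

lemma kron_mulVec {r m n : ℕ} (β : Matrix (Fin r) (Fin m) ℂ) (v : Fin m × Fin n → ℂ)
    (p : Fin r × Fin n) : (kron (n := n) β *ᵥ v) p = ∑ u, β p.1 u * v (u, p.2) := by
  simp [kron, mulVec, dotProduct, Fintype.sum_prod_type, mul_ite, ite_mul, mul_assoc]

lemma kron_conjTranspose {r m n : ℕ} (β : Matrix (Fin r) (Fin m) ℂ) :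
    (kron (n := n) β)ᴴ = kron βᴴ := by
  ext p q
  simp [kron, conjTranspose_apply, eq_comm]
  split <;> simp

lemma inner_eq_dot {ι : Type*} [Fintype ι] (x : EuclideanSpace ℂ ι) (y : ι → ℂ) :
    (inner ℂ x ((WithLp.equiv 2 (ι → ℂ)).symm y) : ℂ) = star (fun i => x i) ⬝ᵥ y := by
  simp [PiLp.inner_apply, RCLike.inner_apply, dotProduct, Pi.star_apply, RCLike.star_def]
  exact Finset.sum_congr rfl fun _ _ => mul_comm _ _


lemma norm_le_of_compressions {r n : ℕ} (X : Matrix (Fin r × Fin n) (Fin r × Fin n) ℂ)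
    (C : ℝ) (hC : 0 ≤ C)
    (h : ∀ (α : Matrix (Fin n) (Fin r) ℂ) (β : Matrix (Fin r) (Fin n) ℂ), ‖α‖ ≤ 1 → ‖β‖ ≤ 1 →
      ‖kron (n := n) α * X * kron (n := n) β‖ ≤ C) : ‖X‖ ≤ C := by
  rw [Matrix.l2_opNorm_def]
  apply ContinuousLinearMap.opNorm_le_bound _ hC
  intro x
  show ‖Matrix.toEuclideanLin X x‖ ≤ C * ‖x‖
  by_cases hx : x = 0
  · simp [hx]
  -- normalize
  set ξ : EuclideanSpace ℂ (Fin r × Fin n) := ((‖x‖ : ℂ))⁻¹ • x with hξdef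
  have hxc : ((‖x‖ : ℂ)) ≠ 0 := by
    simpa using norm_ne_zero_iff.mpr hx
  have hξ1 : ‖ξ‖ = 1 := by
    rw [hξdef, norm_smul]
    simp [norm_inv, Complex.norm_real, norm_norm, inv_mul_cancel₀ (norm_ne_zero_iff.mpr hx)]
  set z : EuclideanSpace ℂ (Fin r × Fin n) := Matrix.toEuclideanLin X ξ with hz
  have hyz : Matrix.toEuclideanLin X x = (‖x‖ : ℂ) • z := by
    rw [hz, hξdef, _root_.map_smul, smul_smul, mul_inv_cancel₀ hxc, one_smul]
  have hnyz : ‖Matrix.toEuclideanLin X x‖ = ‖x‖ * ‖z‖ := by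
    rw [hyz, norm_smul]
    simp [Complex.norm_real]
  rw [hnyz, mul_comm]
  refine mul_le_mul_of_nonneg_right ?_ (norm_nonneg x)
  -- now show ‖z‖ ≤ C
  by_cases hzz : z = 0
  · simp [hzz, hC]
  set η : EuclideanSpace ℂ (Fin r × Fin n) := ((‖z‖ : ℂ))⁻¹ • z with hη
  have hzc : ((‖z‖ : ℂ)) ≠ 0 := by simpa using norm_ne_zero_iff.mpr hzz
  have hη1 : ‖η‖ = 1 := by
    rw [hη, norm_smul]
    simp [norm_inv, Complex.norm_real, norm_norm, inv_mul_cancel₀ (norm_ne_zero_iff.mpr hzz)]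
  -- ⟪η, z⟫ = ‖z‖
  have hinner : (inner ℂ η z : ℂ) = (‖z‖ : ℂ) := by
    rw [hη, inner_smul_left]
    rw [inner_self_eq_norm_sq_to_K (𝕜 := ℂ)]
    rw [map_inv₀, Complex.conj_ofReal]
    field_simp
    rfl
  -- factorizations
  obtain ⟨β, v, hβ, hv, hfv⟩ := factor ξ (le_of_eq hξ1)
  obtain ⟨γ, w, hγ, hw, hfw⟩ := factor η (le_of_eq hη1)
  set Y : Matrix (Fin n × Fin n) (Fin n × Fin n) ℂ := kron (n := n) γᴴ * X * kron (n := n) β with hY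
  have hYC : ‖Y‖ ≤ C := h γᴴ β (by rw [Matrix.l2_opNorm_conjTranspose]; exact hγ) hβ
  -- rewrite the inner product through the factorizations
  have hηf : (fun p : Fin r × Fin n => η p) = kron (n := n) γ *ᵥ (fun q => w q) := by
    funext p; rw [kron_mulVec]; exact hfw p
  have hξf : (fun p : Fin r × Fin n => ξ p) = kron (n := n) β *ᵥ (fun q => v q) := by
    funext p; rw [kron_mulVec]; exact hfv p
  have hz2 : z = (WithLp.equiv 2 ((Fin r × Fin n) → ℂ)).symm (X *ᵥ (fun q => ξ q)) := rfl
  have e1 : (inner ℂ η z : ℂ) = star (fun p : Fin r × Fin n => η p) ⬝ᵥ (X *ᵥ (fun q => ξ q)) := by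
    rw [hz2]; exact inner_eq_dot η _
  set yv : EuclideanSpace ℂ (Fin n × Fin n) :=
    (WithLp.equiv 2 ((Fin n × Fin n) → ℂ)).symm (Y *ᵥ (fun q => v q)) with hyv
  have e2 : (inner ℂ w yv : ℂ) = star (fun q : Fin n × Fin n => w q) ⬝ᵥ (Y *ᵥ (fun q => v q)) :=
    inner_eq_dot w _
  have e3 : (inner ℂ η z : ℂ) = (inner ℂ w yv : ℂ) := by
    rw [e1, e2, hηf, hξf, star_mulVec, mulVec_mulVec, dotProduct_mulVec, vecMul_vecMul,
      ← dotProduct_mulVec, kron_conjTranspose, hY, Matrix.mul_assoc]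
  have hyvnorm : ‖yv‖ ≤ ‖Y‖ := by
    have h5 : ‖yv‖ ≤ ‖Y‖ * ‖v‖ := Matrix.l2_opNorm_mulVec Y v
    calc ‖yv‖ ≤ ‖Y‖ * ‖v‖ := h5
      _ ≤ ‖Y‖ * 1 := mul_le_mul_of_nonneg_left hv (norm_nonneg Y)
      _ = ‖Y‖ := mul_one _
  calc ‖z‖ = ‖((‖z‖ : ℝ) : ℂ)‖ := by rw [Complex.norm_real, norm_norm]
    _ = ‖(inner ℂ η z : ℂ)‖ := by rw [hinner]
    _ = ‖(inner ℂ w yv : ℂ)‖ := by rw [e3]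
    _ ≤ ‖w‖ * ‖yv‖ := norm_inner_le_norm _ _
    _ ≤ 1 * ‖Y‖ := mul_le_mul hw hyvnorm (norm_nonneg yv) zero_le_one
    _ = ‖Y‖ := one_mul _
    _ ≤ C := hYC


end Cor43Aux
end Aux

open Cor43Aux in
lemma pairing_matAct' {B : Type*} [NormedRing B] [StarRing B] [CStarRing B] [NormedAlgebra ℂ B]
    [StarModule ℂ B] [CompleteSpace B] {A : Submodule ℂ B} {n r : ℕ}
    (φ : ↥A →ₗ[ℂ] Mat n ℂ) (a : Mat r ↥A)
    (α : Matrix (Fin n) (Fin r) ℂ) (β : Matrix (Fin r) (Fin n) ℂ) :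
    pairing φ (matAct α a β) = kron (n := n) α * pairing φ a * kron (n := n) β := by
  ext ⟨i, s⟩ ⟨j, t⟩
  show φ ((matAct α a β) i j) s t = _
  have hentry : (matAct α a β) i j = ∑ k, ∑ l, (α i k * β l j) • a k l := rfl
  rw [hentry, map_sum]
  simp only [map_sum, _root_.map_smul, Matrix.sum_apply, Matrix.smul_apply, smul_eq_mul]
  have hrhs : (kron (n := n) α * pairing φ a * kron (n := n) β :
      Matrix (Fin n × Fin n) (Fin n × Fin n) ℂ) (i, s) (j, t)
      = ∑ l, (∑ k, α i k * pairing φ a (k, s) (l, t)) * β l j := by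
    rw [Matrix.mul_apply]
    simp only [kron, Matrix.mul_apply, Matrix.of_apply, Fintype.sum_prod_type, mul_ite, ite_mul,
      mul_zero, zero_mul, mul_one, one_mul, Finset.sum_ite_eq, Finset.sum_ite_eq',
      Finset.mem_univ, if_true]
  rw [hrhs, Finset.sum_comm]
  refine Finset.sum_congr rfl fun l _ => ?_
  rw [Finset.sum_mul]
  refine Finset.sum_congr rfl fun k _ => ?_
  show α i k * β l j * φ (a k l) s t = α i k * pairing φ a (k, s) (l, t) * β l j
  show _ = α i k * φ (a k l) s t * β l j
  ring

/-- **Corollary 4.3.** In the definition of `D_{K_n}` the supremum over all levels `r` may be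
replaced by the supremum over level `n` alone. -/
theorem DK_eq_sup_level_n
    (h1 : (1 : B) ∈ A) (hstar : ∀ a ∈ A, star a ∈ A) (hclosed : IsClosed (A : Set B))
    (K : ∀ r : ℕ, Set (Mat r ↥A)) (hK : IsMatrixMetricSet h1 hstar K)
    (n : ℕ) (φ ψ : ↥A →ₗ[ℂ] Mat n ℂ) (hφ : IsMatrixState h1 φ) (hψ : IsMatrixState h1 ψ) :
    DK K φ ψ = sSup {x : ℝ | ∃ a ∈ K n, x = ‖pairing φ a - pairing ψ a‖} := by
  classical
  set R : Set ℝ := {x : ℝ | ∃ a ∈ K n, x = ‖pairing φ a - pairing ψ a‖} with hR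
  set T : Set ℝ := {x : ℝ | ∃ r, ∃ a ∈ K r, x = ‖pairing φ a - pairing ψ a‖} with hT
  have hDK : DK K φ ψ = sSup T := rfl
  rw [hDK]
  have hRT : R ⊆ T := by
    rintro x ⟨a, ha, hx⟩
    exact ⟨n, a, ha, hx⟩
  by_cases hKn : (K n).Nonempty
  swap
  · have hTe : T = ∅ := by
      ext x
      simp only [hT, Set.mem_setOf_eq, Set.mem_empty_iff_false, iff_false, not_exists]
      rintro r a ⟨ha, -⟩
      exact hKn ⟨matAct 0 a 0, hK.act_mem r n 0 0 (by simp) (by simp) a ha⟩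
    have hRe : R = ∅ := by
      ext x
      simp only [hR, Set.mem_setOf_eq, Set.mem_empty_iff_false, iff_false, not_exists]
      rintro a ⟨ha, -⟩
      exact hKn ⟨a, ha⟩
    rw [hTe, hRe]
  obtain ⟨a0, ha0⟩ := hKn
  have hRne : R.Nonempty := ⟨_, a0, ha0, rfl⟩
  have hTne : T.Nonempty := ⟨_, n, a0, ha0, rfl⟩
  by_cases hbdd : BddAbove R
  swap
  · have hbddT : ¬ BddAbove T := fun hbT => hbdd (hbT.mono hRT)
    rw [Real.sSup_of_not_bddAbove hbddT, Real.sSup_of_not_bddAbove hbdd]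
  have hC0 : (0 : ℝ) ≤ sSup R := le_trans (norm_nonneg _) (le_csSup hbdd ⟨a0, ha0, rfl⟩)
  have key : ∀ x ∈ T, x ≤ sSup R := by
    rintro x ⟨r, a, ha, rfl⟩
    apply Cor43Aux.norm_le_of_compressions _ _ hC0
    intro α β hα hβ
    have hmem : matAct α a β ∈ K n := hK.act_mem r n α β hα hβ a ha
    have heq : Cor43Aux.kron (n := n) α * (pairing φ a - pairing ψ a) * Cor43Aux.kron (n := n) β
        = pairing φ (matAct α a β) - pairing ψ (matAct α a β) := by
      rw [pairing_matAct', pairing_matAct', Matrix.mul_sub, Matrix.sub_mul]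
    rw [heq]
    exact le_csSup hbdd ⟨matAct α a β, hmem, rfl⟩
  exact le_antisymm (csSup_le hTne key)
    (csSup_le_csSup ⟨sSup R, fun x hx => key x hx⟩ hRne hRT)
end
end

section
/- Let (A,1) be a matrix order unit space and K = (K_n) a matrix metric set of (A,1). Let S = (S_n), S_n ⊆ M_n(A), be a graded set such that each S_n is norm bounded and for every ε > 0 there exists a sequence (λ_n) of positive reals with S_n ⊆ {b ∈ M_n(A) : ‖b‖_n ≤ ε} + λ_n K_n + M_n(ℂ1) for every n, where M_n(ℂ1) = {[α_ij 1] : [α_ij] ∈ M_n(ℂ)}. Then each S_n is norm relatively compact in M_n(A). -/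
open scoped ComplexOrder Matrix.Norms.L2Operator
open Matrix

noncomputable section

variable {B : Type*} [NormedRing B] [StarRing B] [CStarRing B] [NormedAlgebra ℂ B]
  [StarModule ℂ B] [CompleteSpace B]

variable {A : Submodule ℂ B}

-- Auxiliary lemmas (to be appended after matNorm definition)

section AuxSqrt
open scoped NNReal

set_option maxHeartbeats 1000000
set_option synthInstance.maxHeartbeats 400000

variable {ι : Type*} [Fintype ι] [DecidableEq ι]

private lemma exists_matpos_add (x : Matrix ι ι B) (hx : xᴴ = x) :
    ∃ t : ℝ, 0 ≤ t ∧ MatPos (t • (1 : Matrix ι ι B) + x) := by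
  letI : NormedRing (Matrix ι ι B) := Matrix.linftyOpNormedRing
  letI : NormedSpace ℂ (Matrix ι ι B) := Matrix.linftyOpNormedSpace
  haveI : CompleteSpace (Matrix ι ι B) :=
    inferInstanceAs (CompleteSpace (ι → ι → B))
  -- a Lipschitz bound for `conjTranspose` in the L∞-operator norm
  have hstar_norm : ∀ m : Matrix ι ι B, ‖mᴴ‖ ≤ (Fintype.card ι : ℝ) * ‖m‖ := by
    intro m
    have hentry : ∀ i j, ‖m i j‖₊ ≤ ‖m‖₊ := by
      intro i j
      rw [Matrix.linfty_opNNNorm_def]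
      calc ‖m i j‖₊ ≤ ∑ j', ‖m i j'‖₊ :=
            Finset.single_le_sum (f := fun j' => ‖m i j'‖₊) (fun _ _ => by positivity) (Finset.mem_univ j)
        _ ≤ _ := Finset.le_sup (f := fun i => ∑ j', ‖m i j'‖₊) (Finset.mem_univ i)
    have hnn : ‖mᴴ‖₊ ≤ (Fintype.card ι) • ‖m‖₊ := by
      rw [Matrix.linfty_opNNNorm_def]
      apply Finset.sup_le
      intro j _
      calc ∑ i, ‖mᴴ j i‖₊ = ∑ i, ‖m i j‖₊ := by
            simp [Matrix.conjTranspose_apply, nnnorm_star]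
        _ ≤ ∑ _i : ι, ‖m‖₊ := Finset.sum_le_sum fun i _ => hentry i j
        _ = (Fintype.card ι) • ‖m‖₊ := by
            rw [Finset.sum_const, Finset.card_univ]
    calc ‖mᴴ‖ = ((‖mᴴ‖₊ : ℝ≥0) : ℝ) := rfl
      _ ≤ (((Fintype.card ι) • ‖m‖₊ : ℝ≥0) : ℝ) := by exact_mod_cast hnn
      _ = (Fintype.card ι : ℝ) * ‖m‖ := by
          rw [NNReal.coe_nsmul, nsmul_eq_mul, coe_nnnorm]
  have hstarcont : Continuous fun s : Matrix ι ι B => sᴴ := by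
    have : LipschitzWith (Fintype.card ι) (fun s : Matrix ι ι B => sᴴ) := by
      apply LipschitzWith.of_dist_le_mul
      intro s s'
      rw [dist_eq_norm, dist_eq_norm, ← Matrix.conjTranspose_sub]
      exact le_trans (hstar_norm (s - s')) (by push_cast; rfl)
    exact this.continuous
  set t : ℝ := 2 * ‖x‖ + 1 with htdef
  have htpos : 0 < t := by positivity
  set w : Matrix ι ι B := ((t⁻¹ : ℝ) : ℂ) • x with hwdef
  have hwnorm : ‖w‖ ≤ 2⁻¹ := by
    rw [hwdef, norm_smul]
    have h1 : ‖((t⁻¹ : ℝ) : ℂ)‖ = t⁻¹ := by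
      rw [Complex.norm_real, Real.norm_eq_abs, abs_of_pos (by positivity)]
    rw [h1]
    rw [inv_mul_le_iff₀ htpos]
    nlinarith [norm_nonneg x]
  have hwsa : wᴴ = w := by
    rw [hwdef, Matrix.conjTranspose_smul, hx, Complex.star_def, Complex.conj_ofReal]
  set SA : Set (Matrix ι ι B) := {s | ‖s‖ ≤ 2⁻¹ ∧ sᴴ = s} with hSAdef
  have hclosedSA : IsClosed SA := by
    have : SA = {s : Matrix ι ι B | ‖s‖ ≤ 2⁻¹} ∩ {s : Matrix ι ι B | sᴴ = s} := rfl
    rw [this]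
    exact (isClosed_le continuous_norm continuous_const).inter
      (isClosed_eq hstarcont continuous_id)
  haveI : @CompleteSpace SA PseudoMetricSpace.toUniformSpace := by exact hclosedSA.completeSpace_coe
  haveI : Nonempty SA := ⟨⟨0, by simp, by simp⟩⟩
  have hhalf : ‖(2⁻¹ : ℂ)‖ = 2⁻¹ := by norm_num
  have hFmem : ∀ s : Matrix ι ι B, s ∈ SA → (2⁻¹ : ℂ) • (w - s * s) ∈ SA := by
    rintro s ⟨hs1, hs2⟩
    constructor
    · rw [norm_smul, hhalf]
      have h1 : ‖w - s * s‖ ≤ ‖w‖ + ‖s * s‖ := norm_sub_le _ _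
      have h2 : ‖s * s‖ ≤ ‖s‖ * ‖s‖ := norm_mul_le _ _
      nlinarith [norm_nonneg s]
    · rw [Matrix.conjTranspose_smul, Matrix.conjTranspose_sub, hwsa,
        Matrix.conjTranspose_mul, hs2]
      norm_num
  set g : SA → SA := fun s => ⟨(2⁻¹ : ℂ) • (w - s.1 * s.1), hFmem _ s.2⟩ with hgdef
  have hcontr : ContractingWith 2⁻¹ g := by
    refine ⟨by exact_mod_cast (by norm_num : (2:ℝ)⁻¹ < 1), LipschitzWith.of_dist_le_mul fun s s' => ?_⟩
    rw [Subtype.dist_eq, dist_eq_norm]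
    have hval : (g s).1 - (g s').1 = (2⁻¹ : ℂ) • (s'.1 * s'.1 - s.1 * s.1) := by
      show (2⁻¹ : ℂ) • (w - s.1 * s.1) - (2⁻¹ : ℂ) • (w - s'.1 * s'.1) = _
      rw [← smul_sub]
      congr 1
      abel
    rw [hval, norm_smul, hhalf]
    have hid : s'.1 * s'.1 - s.1 * s.1 = s'.1 * (s'.1 - s.1) + (s'.1 - s.1) * s.1 := by
      noncomm_ring
    have hb1 : ‖s.1‖ ≤ 2⁻¹ := s.2.1
    have hb2 : ‖s'.1‖ ≤ 2⁻¹ := s'.2.1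
    have h3 : ‖s'.1 * s'.1 - s.1 * s.1‖ ≤ ‖s'.1‖ * ‖s'.1 - s.1‖ + ‖s'.1 - s.1‖ * ‖s.1‖ := by
      rw [hid]
      exact le_trans (norm_add_le _ _) (add_le_add (norm_mul_le _ _) (norm_mul_le _ _))
    have h4 : ‖s'.1 - s.1‖ = dist s s' := by rw [Subtype.dist_eq, dist_eq_norm, norm_sub_rev]
    have h5 : (0:ℝ) ≤ dist s s' := dist_nonneg
    rw [h4] at h3
    have h6 : (((2:ℝ≥0)⁻¹ : ℝ≥0) : ℝ) = (2:ℝ)⁻¹ := by push_cast; ring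
    rw [h6]
    nlinarith [h3, norm_nonneg (s'.1 * s'.1 - s.1 * s.1)]
  set s₀ := ContractingWith.fixedPoint g hcontr with hs₀def
  have hfix : g s₀ = s₀ := hcontr.fixedPoint_isFixedPt
  have heq : (2⁻¹ : ℂ) • (w - s₀.1 * s₀.1) = s₀.1 := congrArg Subtype.val hfix
  obtain ⟨hs₀norm, hs₀sa⟩ := s₀.2
  have hw : w = (2 : ℂ) • s₀.1 + s₀.1 * s₀.1 := by
    have h2 : (2 : ℂ) • ((2⁻¹ : ℂ) • (w - s₀.1 * s₀.1)) = (2 : ℂ) • s₀.1 := by rw [heq]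
    rw [smul_smul] at h2
    norm_num at h2
    exact (sub_eq_iff_eq_add.mp h2)
  have hysa : (1 + s₀.1)ᴴ = 1 + s₀.1 := by
    rw [Matrix.conjTranspose_add, Matrix.conjTranspose_one, hs₀sa]
  have hyy : (1 + s₀.1) * (1 + s₀.1) = 1 + w := by
    rw [hw, two_smul]
    noncomm_ring
  refine ⟨t, htpos.le, ((Real.sqrt t : ℝ) : ℂ) • (1 + s₀.1), ?_⟩
  rw [Matrix.conjTranspose_smul, hysa, Complex.star_def, Complex.conj_ofReal,
    smul_mul_assoc, mul_smul_comm, smul_smul, ← Complex.ofReal_mul,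
    Real.mul_self_sqrt htpos.le, hyy, Complex.coe_smul, smul_add, hwdef,
    Complex.coe_smul, smul_smul, mul_inv_cancel₀ htpos.ne', one_smul]

end AuxSqrt


section AuxOrder

set_option maxHeartbeats 1000000
set_option synthInstance.maxHeartbeats 400000

private lemma matpos_sum_diag {n : ℕ} {t : ℝ} {a : Mat n ↥A}
    {c : Matrix (Fin n ⊕ Fin n) (Fin n ⊕ Fin n) B}
    (hc : Matrix.fromBlocks (t • (1 : Mat n B)) (mval a) (mval a)ᴴ (t • 1) = cᴴ * c)
    (p : Fin n ⊕ Fin n) : ∑ m, star (c m p) * c m p = t • (1 : B) := by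
  have h1 : (cᴴ * c) p p = ∑ m, star (c m p) * c m p := by
    simp [Matrix.mul_apply, Matrix.conjTranspose_apply]
  rw [← h1, ← hc]
  rcases p with i | i <;>
    simp [Matrix.fromBlocks_apply₁₁, Matrix.fromBlocks_apply₂₂, Matrix.smul_apply,
      Matrix.one_apply_eq]

private lemma matpos_entry_bound {n : ℕ} {t : ℝ} {a : Mat n ↥A}
    (h : MatPos (Matrix.fromBlocks (t • (1 : Mat n B)) (mval a) (mval a)ᴴ (t • 1)))
    (i j : Fin n) :
    ‖(a i j : B)‖ ≤ 2 * n * |t| := by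
  obtain ⟨c, hc⟩ := h
  rcases subsingleton_or_nontrivial B with hB | hB
  · have h0 : (a i j : B) = 0 := Subsingleton.elim _ _
    rw [h0, norm_zero]
    positivity
  letI : CStarAlgebra B := {}
  letI : PartialOrder B := CStarAlgebra.spectralOrder B
  letI : StarOrderedRing B := CStarAlgebra.spectralOrderedRing B
  have hsq : ∀ (k p : Fin n ⊕ Fin n), ‖c k p‖ * ‖c k p‖ ≤ |t| := by
    intro k p
    have hdiag := matpos_sum_diag hc p
    have hle : star (c k p) * c k p ≤ ∑ m, star (c m p) * c m p :=
      Finset.single_le_sum (f := fun m => star (c m p) * c m p)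
        (fun m _ => star_mul_self_nonneg (c m p)) (Finset.mem_univ k)
    have h2 : ‖star (c k p) * c k p‖ ≤ ‖t • (1 : B)‖ := by
      rw [← hdiag]
      exact CStarAlgebra.norm_le_norm_of_nonneg_of_le (star_mul_self_nonneg _) hle
    calc ‖c k p‖ * ‖c k p‖ = ‖star (c k p) * c k p‖ := (CStarRing.norm_star_mul_self).symm
      _ ≤ ‖t • (1 : B)‖ := h2
      _ = |t| := by rw [norm_smul, Real.norm_eq_abs, CStarRing.norm_one, mul_one]
  have hent : (a i j : B) = ∑ m, star (c m (Sum.inl i)) * c m (Sum.inr j) := by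
    have h1 : (cᴴ * c) (Sum.inl i) (Sum.inr j)
        = ∑ m, star (c m (Sum.inl i)) * c m (Sum.inr j) := by
      simp [Matrix.mul_apply, Matrix.conjTranspose_apply]
    rw [← h1, ← hc]
    simp [Matrix.fromBlocks_apply₁₂, mval]
  rw [hent]
  calc ‖∑ m, star (c m (Sum.inl i)) * c m (Sum.inr j)‖
      ≤ ∑ m, ‖star (c m (Sum.inl i)) * c m (Sum.inr j)‖ := norm_sum_le _ _
    _ ≤ ∑ _m : Fin n ⊕ Fin n, |t| := by
        refine Finset.sum_le_sum fun m _ => ?_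
        have h1 := hsq m (Sum.inl i)
        have h2 := hsq m (Sum.inr j)
        have h3 := norm_mul_le (star (c m (Sum.inl i))) (c m (Sum.inr j))
        rw [norm_star] at h3
        nlinarith [norm_nonneg (c m (Sum.inl i)), norm_nonneg (c m (Sum.inr j)),
          abs_nonneg t, sq_nonneg (‖c m (Sum.inl i)‖ - ‖c m (Sum.inr j)‖)]
    _ = 2 * n * |t| := by
        rw [Finset.sum_const, Finset.card_univ, Fintype.card_sum, Fintype.card_fin,
          nsmul_eq_mul]
        push_cast
        ring

private lemma matpos_t_nonneg {n : ℕ} (hn : 0 < n) [Nontrivial B] {t : ℝ} {a : Mat n ↥A}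
    (h : MatPos (Matrix.fromBlocks (t • (1 : Mat n B)) (mval a) (mval a)ᴴ (t • 1))) :
    0 ≤ t := by
  obtain ⟨c, hc⟩ := h
  letI : CStarAlgebra B := {}
  letI : PartialOrder B := CStarAlgebra.spectralOrder B
  letI : StarOrderedRing B := CStarAlgebra.spectralOrderedRing B
  have hdiag := matpos_sum_diag hc (Sum.inl ⟨0, hn⟩)
  have hpos : 0 ≤ t • (1 : B) := by
    rw [← hdiag]
    exact Finset.sum_nonneg fun m _ => star_mul_self_nonneg _
  by_contra hcon
  push_neg at hcon
  have hz : star (((Real.sqrt (-t) : ℝ) : ℂ) • (1 : B)) * (((Real.sqrt (-t) : ℝ) : ℂ) • (1 : B))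
      = (-t) • (1 : B) := by
    rw [star_smul, star_one, smul_mul_assoc, one_mul, smul_smul, Complex.star_def,
      Complex.conj_ofReal, ← Complex.ofReal_mul, Real.mul_self_sqrt (by linarith),
      Complex.coe_smul]
  have hpos2 : 0 ≤ (-t) • (1 : B) := by
    rw [← hz]
    exact star_mul_self_nonneg _
  have hle : t • (1 : B) ≤ 0 := by
    have h2 := le_add_of_nonneg_right (a := t • (1 : B)) hpos2
    rwa [← add_smul, add_neg_cancel, zero_smul] at h2
  have h0 : t • (1 : B) = 0 := le_antisymm hle hpos
  have habs : |t| = 0 := by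
    have h3 := congrArg norm h0
    rwa [norm_smul, Real.norm_eq_abs, CStarRing.norm_one, mul_one, norm_zero] at h3
  rw [abs_eq_zero] at habs
  linarith

private lemma matNorm_entry_bound {n : ℕ} (hn : 0 < n) [Nontrivial B] {b : Mat n ↥A} {ε : ℝ}
    (hε : 0 < ε) (hb : matNorm b ≤ ε) (i j : Fin n) : ‖(b i j : B)‖ ≤ 4 * n * ε := by
  set T := {s : ℝ | MatPos (Matrix.fromBlocks (s • (1 : Mat n B)) (mval b) (mval b)ᴴ (s • 1))}
    with hT
  have hne : T.Nonempty := by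
    have hsa : (Matrix.fromBlocks (0 : Mat n B) (mval b) (mval b)ᴴ 0)ᴴ
        = Matrix.fromBlocks (0 : Mat n B) (mval b) (mval b)ᴴ 0 := by
      rw [Matrix.fromBlocks_conjTranspose]
      simp
    obtain ⟨t₀, _, hpos⟩ :=
      exists_matpos_add (Matrix.fromBlocks (0 : Mat n B) (mval b) (mval b)ᴴ 0) hsa
    refine ⟨t₀, ?_⟩
    have heq : t₀ • (1 : Matrix (Fin n ⊕ Fin n) (Fin n ⊕ Fin n) B)
          + Matrix.fromBlocks 0 (mval b) (mval b)ᴴ 0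
        = Matrix.fromBlocks (t₀ • (1 : Mat n B)) (mval b) (mval b)ᴴ (t₀ • 1) := by
      rw [← Matrix.fromBlocks_one, Matrix.fromBlocks_smul, Matrix.fromBlocks_add]
      simp
    show MatPos _
    rwa [heq] at hpos
  obtain ⟨u, huT, hult⟩ := Real.lt_sInf_add_pos hne hε
  have hmn : matNorm b = sInf T := rfl
  have hu2 : u < 2 * ε := by
    have : sInf T ≤ ε := hmn ▸ hb
    linarith
  have hub := matpos_entry_bound huT i j
  have habs : |u| = u := abs_of_nonneg (matpos_t_nonneg hn huT)
  rw [habs] at hub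
  have hn' : (0 : ℝ) ≤ (n : ℝ) := Nat.cast_nonneg n
  nlinarith

end AuxOrder


set_option maxHeartbeats 1000000 in
set_option synthInstance.maxHeartbeats 400000 in
/-- If each `S_n` is norm bounded and for every `ε > 0` there is a sequence `(λ_n)` of positive
reals with `S_n ⊆ A_{n,ε} + λ_n K_n + M_n(ℂ1)` for every `n`, then each `S_n` is norm
relatively compact in `M_n(A)`. -/
theorem decomposition_imp_relatively_compact
    (h1 : (1 : B) ∈ A) (hstar : ∀ a ∈ A, star a ∈ A) (hclosed : IsClosed (A : Set B))
    (K : ∀ r : ℕ, Set (Mat r ↥A)) (hK : IsMatrixMetricSet h1 hstar K)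
    (S : ∀ n : ℕ, Set (Mat n ↥A)) (hS : Cond3 h1 K S) :
    Cond1 S := by
  intro n
  rcases subsingleton_or_nontrivial B with hB | hB
  · haveI : Subsingleton ↥A := ⟨fun a b => Subtype.ext (Subsingleton.elim _ _)⟩
    haveI : Subsingleton (Mat n ↥A) := inferInstanceAs (Subsingleton (Fin n → Fin n → ↥A))
    exact (Set.toFinite _).isCompact
  rcases Nat.eq_zero_or_pos n with hn | hn
  · subst hn
    haveI : Subsingleton (Mat 0 ↥A) := inferInstanceAs (Subsingleton (Fin 0 → Fin 0 → ↥A))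
    exact (Set.toFinite _).isCompact
  haveI : CompleteSpace ↥A := hclosed.completeSpace_coe
  letI : MetricSpace (Mat n ↥A) := inferInstanceAs (MetricSpace (Fin n → Fin n → ↥A))
  haveI : CompleteSpace (Mat n ↥A) := inferInstanceAs (CompleteSpace (Fin n → Fin n → ↥A))
  suffices htb : TotallyBounded (S n) by
    exact htb.closure.isCompact_of_isClosed isClosed_closure
  rw [Metric.totallyBounded_iff]
  intro ε' hε'
  -- a uniform bound on the entries of elements of `S n`
  obtain ⟨C₀, hC₀⟩ := hS.1 n
  set C : ℝ := max C₀ 1 with hCdef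
  have hCpos : 0 < C := lt_of_lt_of_le one_pos (le_max_right _ _)
  have hentA : ∀ a ∈ S n, ∀ i j, ‖((a : Mat n ↥A) i j : B)‖ ≤ 4 * n * C := fun a ha i j =>
    matNorm_entry_bound hn hCpos (le_trans (hC₀ a ha) (le_max_left _ _)) i j
  -- the small parameter
  set ε : ℝ := ε' / (16 * (n + 1)) with hεdef
  have hεpos : 0 < ε := by positivity
  obtain ⟨lam, hlam, hdec⟩ := hS.2 ε hεpos
  -- a uniform bound on the entries of elements of `K n`
  obtain ⟨R, hR⟩ := (hK.compact n).isBounded.subset_closedBall 0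
  have hKentry : ∀ c ∈ K n, ∀ i j, ‖(c : Mat n ↥A) i j‖ ≤ R := by
    intro c hc i j
    have h2 : dist c (0 : Mat n ↥A) ≤ R := hR hc
    have h3 : dist (c i) ((0 : Mat n ↥A) i) ≤ dist c 0 := dist_le_pi_dist c 0 i
    have h4 : dist (c i j) ((0 : Mat n ↥A) i j) ≤ dist (c i) ((0 : Mat n ↥A) i) :=
      dist_le_pi_dist (c i) ((0 : Mat n ↥A) i) j
    have h5 : dist (c i j) (0 : ↥A) ≤ R := le_trans (le_trans h4 h3) h2
    rwa [dist_zero_right] at h5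
  -- the compact "big set"
  set Rd : ℝ := 4 * n * C + 4 * n * ε + lam n * R + 1 with hRdef
  set box : Set (Mat n ℂ) := {α | ∀ i j, ‖α i j‖ ≤ Rd} with hboxdef
  have hbox : IsCompact box := by
    have hbeq : box = Set.pi Set.univ fun i : Fin n =>
        Set.pi Set.univ fun _ : Fin n => Metric.closedBall (0 : ℂ) Rd := by
      ext α
      simp only [hboxdef, Set.mem_setOf_eq]
      constructor
      · intro h
        refine Set.mem_univ_pi.mpr fun i => Set.mem_univ_pi.mpr fun j => ?_
        simpa [Metric.mem_closedBall, dist_zero_right] using h i j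
      · intro h i j
        have h2 := Set.mem_univ_pi.mp (Set.mem_univ_pi.mp h i) j
        simpa [Metric.mem_closedBall, dist_zero_right] using h2
    rw [hbeq]
    exact isCompact_univ_pi fun i => isCompact_univ_pi fun j => isCompact_closedBall _ _
  have hcont : Continuous fun p : Mat n ↥A × Mat n ℂ =>
      (lam n : ℂ) • p.1 + scalarMat h1 p.2 := by
    apply continuous_matrix
    intro i j
    have hrw : (fun p : Mat n ↥A × Mat n ℂ => ((lam n : ℂ) • p.1 + scalarMat h1 p.2) i j)
        = fun p : Mat n ↥A × Mat n ℂ =>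
            (lam n : ℂ) • p.1 i j + p.2 i j • (⟨1, h1⟩ : ↥A) := rfl
    rw [hrw]
    exact Continuous.add (f := fun p : Mat n ↥A × Mat n ℂ => (lam n : ℂ) • p.1 i j)
        (g := fun p : Mat n ↥A × Mat n ℂ => p.2 i j • (⟨1, h1⟩ : ↥A))
        ((continuous_fst.matrix_elem i j).const_smul (lam n : ℂ))
      ((continuous_snd.matrix_elem i j).smul continuous_const)
  set E : Set (Mat n ↥A) := (fun p : Mat n ↥A × Mat n ℂ =>
      (lam n : ℂ) • p.1 + scalarMat h1 p.2) '' ((K n) ×ˢ box) with hEdef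
  have hE : IsCompact E := ((hK.compact n).prod hbox).image hcont
  obtain ⟨F, hFfin, hFE⟩ := Metric.totallyBounded_iff.mp hE.totallyBounded (ε' / 2)
    (by positivity)
  refine ⟨F, hFfin, ?_⟩
  intro a ha
  obtain ⟨b, c, d, hb, hcK, ⟨α, hd⟩, habc⟩ := hdec n a ha
  have hbent : ∀ i j, ‖(b i j : B)‖ ≤ 4 * n * ε := fun i j =>
    matNorm_entry_bound hn hεpos hb i j
  -- entries of the pieces
  have hαent : ∀ i j, ‖α i j‖ ≤ Rd := by
    intro i j
    have hdij : (d i j : B) = α i j • (1 : B) := by rw [hd]; rfl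
    have hnd : ‖(d i j : B)‖ = ‖α i j‖ := by
      rw [hdij, norm_smul, CStarRing.norm_one, mul_one]
    have hentry : d i j = a i j - b i j - (lam n : ℂ) • c i j := by
      have h6 := congrFun (congrFun habc i) j
      have h7 : a i j = b i j + (lam n : ℂ) • c i j + d i j := h6
      rw [h7]
      abel
    have h8 : ‖(d i j : B)‖ ≤ ‖(a i j : B)‖ + ‖(b i j : B)‖ + lam n * ‖(c i j : B)‖ := by
      rw [hentry]
      push_cast
      refine le_trans (norm_sub_le _ _) ?_
      have h9 : ‖((a i j : B) - (b i j : B))‖ ≤ ‖(a i j : B)‖ + ‖(b i j : B)‖ :=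
        norm_sub_le _ _
      have h10 : ‖(lam n : ℂ) • (c i j : B)‖ = lam n * ‖(c i j : B)‖ := by
        rw [norm_smul, Complex.norm_real, Real.norm_eq_abs, abs_of_pos (hlam n)]
      rw [h10]
      linarith
    have h11 : ‖(c i j : B)‖ ≤ R := hKentry c hcK i j
    have h12 : lam n * ‖(c i j : B)‖ ≤ lam n * R :=
      mul_le_mul_of_nonneg_left h11 (hlam n).le
    have h13 := hentA a ha i j
    have h14 := hbent i j
    rw [hnd] at h8
    rw [hRdef]
    linarith
  set e : Mat n ↥A := (lam n : ℂ) • c + scalarMat h1 α with hedef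
  have heE : e ∈ E := ⟨(c, α), ⟨hcK, hαent⟩, rfl⟩
  obtain ⟨y, hyF, hye⟩ := Set.mem_iUnion₂.mp (hFE heE)
  refine Set.mem_iUnion₂.mpr ⟨y, hyF, ?_⟩
  have hae : dist a e ≤ ε' / 4 := by
    refine (dist_pi_le_iff (by positivity)).mpr ?_
    intro i
    rw [dist_pi_le_iff (by positivity)]
    intro j
    have hdiff : a i j - e i j = b i j := by
      have h7 : a i j = b i j + (lam n : ℂ) • c i j + d i j := congrFun (congrFun habc i) j
      have h8 : e i j = (lam n : ℂ) • c i j + α i j • (⟨1, h1⟩ : ↥A) := rfl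
      rw [h7, h8, hd]
      show b i j + (lam n : ℂ) • c i j + α i j • (⟨1, h1⟩ : ↥A)
          - ((lam n : ℂ) • c i j + α i j • (⟨1, h1⟩ : ↥A)) = b i j
      abel
    rw [dist_eq_norm, hdiff]
    have h14 : ‖(b i j : B)‖ ≤ 4 * n * ε := hbent i j
    have h15 : ‖b i j‖ = ‖(b i j : B)‖ := rfl
    rw [h15]
    have hnn : (0 : ℝ) ≤ (n : ℝ) := Nat.cast_nonneg n
    have hkey : 4 * (n : ℝ) * ε ≤ ε' / 4 := by
      rw [hεdef]
      have e1 : 4 * (n : ℝ) * (ε' / (16 * ((n : ℝ) + 1)))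
          = (n : ℝ) / ((n : ℝ) + 1) * (ε' / 4) := by
        field_simp
        ring
      have e2 : (n : ℝ) / ((n : ℝ) + 1) ≤ 1 := by
        rw [div_le_one (by positivity)]
        linarith
      rw [e1]
      calc (n : ℝ) / ((n : ℝ) + 1) * (ε' / 4) ≤ 1 * (ε' / 4) :=
            mul_le_mul_of_nonneg_right e2 (by positivity)
        _ = ε' / 4 := one_mul _
    linarith
  rw [Metric.mem_ball] at hye ⊢
  calc dist a y ≤ dist a e + dist e y := dist_triangle a e y
    _ < ε' / 4 + ε' / 2 := by linarith [hae, hye]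
    _ < ε' := by linarith
end
end
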